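/- Let B = E ⊕ F be a splitting of a Banach space into closed subspaces and let E' be a closed subspace with d_H(E, E') < |π_{E⊕F}|^{-1} (so that B = E' ⊕ F). Then: (i) |π_{E'⊕F}| ≤ |π_{E⊕F}| / (1 − |π_{E⊕F}| d_H(E, E')); and (ii) |π_{F⊕E'}|_E| ≤ 2 |π_{E'⊕F}| d_H(E, E'). -/

import Mathlib

open MeasureTheory Filter Metric Module Submodule Set

noncomputable section

namespace BY

variable {B B' : Type*}

/-- The unit sphere of a subspace `E`. -/
def subSphere [NormedAddCommGroup B] [NormedSpace ℝ B] (E : Submodule ℝ B) : Set B :=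
  {v : B | v ∈ E ∧ ‖v‖ = 1}

/-- `d_H(E, E')`: the Hausdorff distance between the unit spheres of `E` and `E'`. -/
def dH [NormedAddCommGroup B] [NormedSpace ℝ B] (E E' : Submodule ℝ B) : ℝ :=
  Metric.hausdorffDist (subSphere E) (subSphere E')

/-- The supremum of `‖π x‖` over `x ∈ S`, where `π` is the projection onto `E` along `F`. -/
def projNormOn [NormedAddCommGroup B] [NormedSpace ℝ B] (E F : Submodule ℝ B)
    (h : IsCompl E F) (S : Set B) : ℝ :=
  sSup ((fun x => ‖(E.linearProjOfIsCompl F h x : B)‖) '' S)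

/-- `|π_{E⊕F}|`: the operator norm of the projection onto `E` along `F`. -/
def projNorm [NormedAddCommGroup B] [NormedSpace ℝ B] (E F : Submodule ℝ B)
    (h : IsCompl E F) : ℝ :=
  projNormOn E F h (Metric.closedBall 0 1)

/-- `α(E, F) = inf { ‖e - f‖ : e ∈ E, ‖e‖ = 1, f ∈ F }`. -/
def alphaAngle [NormedAddCommGroup B] [NormedSpace ℝ B] (E F : Submodule ℝ B) : ℝ :=
  sInf {r : ℝ | ∃ e ∈ E, ∃ f ∈ F, ‖e‖ = 1 ∧ r = ‖e - f‖}

/-- `ω_k`: the volume of the Euclidean unit ball in `ℝ^k`. -/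
def euclideanBallVol (k : ℕ) : ENNReal :=
  volume (Metric.closedBall (0 : EuclideanSpace ℝ (Fin k)) 1)

/-- `μ` is the induced volume `m_E` on the `k`-dimensional subspace `E`: the (unique) Haar
measure on `E` assigning mass `ω_k` to the unit ball of `E`. -/
def IsInducedVolume [NormedAddCommGroup B] [NormedSpace ℝ B] [MeasurableSpace B]
    (E : Submodule ℝ B) (k : ℕ) (μ : Measure E) : Prop :=
  Measure.IsAddHaarMeasure μ ∧ μ {v : E | ‖v‖ ≤ 1} = euclideanBallVol k

/-- `det(A|E)`, computed with respect to induced volumes `μE` on `E` and `μF` on a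
subspace `F` containing `A(E)`: the ratio `μF(A(B_E)) / μE(B_E)` where `B_E` is
the unit ball of `E`. -/
def detIn [NormedAddCommGroup B] [NormedSpace ℝ B] [NormedAddCommGroup B'] [NormedSpace ℝ B']
    [MeasurableSpace B] [MeasurableSpace B']
    (A : B →L[ℝ] B') (E : Submodule ℝ B) (F : Submodule ℝ B')
    (μE : Measure E) (μF : Measure F) : ℝ :=
  (μF {w : F | ∃ v : B, v ∈ E ∧ ‖v‖ ≤ 1 ∧ A v = (w : B')}).toReal /
    (μE {v : E | ‖v‖ ≤ 1}).toReal

/-- `P[v₁, …, v_k]`: the parallelepiped spanned by the vectors `v i`. -/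
def pped [AddCommGroup B] [Module ℝ B] {k : ℕ} (v : Fin k → B) : Set B :=
  {x : B | ∃ a : Fin k → ℝ, (∀ i, a i ∈ Set.Icc (0 : ℝ) 1) ∧ x = ∑ i, a i • v i}

/-- `N[v₁, …, v_k]`: the sum of the norms of the projections, within the span of the `v i`,
onto each `⟨v i⟩` along the span of the other basis vectors. -/
def Nquan [NormedAddCommGroup B] [NormedSpace ℝ B] {k : ℕ} (v : Fin k → B) : ℝ :=
  ∑ i, sSup {r : ℝ | ∃ a : Fin k → ℝ, ‖∑ j, a j • v j‖ ≤ 1 ∧ r = ‖a i • v i‖}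

/-- The operator norm of the restriction of `A` to the subspace `E`. -/
def opNormOnSub [NormedAddCommGroup B] [NormedSpace ℝ B] [NormedAddCommGroup B']
    [NormedSpace ℝ B'] (A : B →L[ℝ] B') (E : Submodule ℝ B) : ℝ :=
  sSup {r : ℝ | ∃ v ∈ E, ‖v‖ ≤ 1 ∧ r = ‖A v‖}

/-- The `n`-th iterate (`n ∈ ℤ`) of the invertible pair `(f, g)`, `g = f⁻¹`. -/
def zIter {X : Type*} (f g : X → X) (n : ℤ) (x : X) : X :=
  if 0 ≤ n then f^[n.toNat] x else g^[(-n).toNat] x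

/-- `ψ'(x) = sup_{n ∈ ℤ} e^{-|n| δ} ψ(f^n x)`. -/
def psiSup {X : Type*} (f g : X → X) (ψ : X → ℝ) (δ : ℝ) (x : X) : ℝ :=
  sSup (Set.range fun n : ℤ => Real.exp (-|(n : ℝ)| * δ) * ψ (zIter f g n x))

/-- The cocycle `T^n_x = T_{f^{n-1} x} ∘ ⋯ ∘ T_x`. -/
def cocycle {X : Type*} [NormedAddCommGroup B] [NormedSpace ℝ B]
    (f : X → X) (T : X → B →L[ℝ] B) : ℕ → X → B →L[ℝ] B
  | 0, _ => ContinuousLinearMap.id ℝ B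
  | n + 1, x => (cocycle f T n (f x)).comp (T x)

end BY

end
section Aux
variable {X : Type*} [NormedAddCommGroup X] [NormedSpace ℝ X]

/-- If `S` is a closed subspace of `V` and every `x ∈ V` can be approximated by an element
of `S` within ratio `θ < 1`, then `V ≤ S`. -/
lemma ratio_dense [CompleteSpace X] (S V : Submodule ℝ X) (hS : IsClosed (S : Set X))
    (hSV : S ≤ V) {θ : ℝ} (hθ0 : 0 ≤ θ) (hθ : θ < 1)
    (h : ∀ x ∈ V, ∃ s ∈ S, ‖x - s‖ ≤ θ * ‖x‖) : V ≤ S := by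
  intro x hx
  have h' : ∀ y : X, ∃ s, y ∈ V → s ∈ S ∧ ‖y - s‖ ≤ θ * ‖y‖ := by
    intro y
    by_cases hy : y ∈ V
    · obtain ⟨s, hs1, hs2⟩ := h y hy
      exact ⟨s, fun _ => ⟨hs1, hs2⟩⟩
    · exact ⟨0, fun hy' => absurd hy' hy⟩
  choose g hg using h'
  set r : ℕ → X := fun n => (fun y => y - g y)^[n] x with hr
  have hr0 : r 0 = x := rfl
  have hrsucc : ∀ n, r (n + 1) = r n - g (r n) := fun n => Function.iterate_succ_apply' _ n x
  have key : ∀ n, r n ∈ V ∧ ‖r n‖ ≤ θ ^ n * ‖x‖ := by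
    intro n
    induction n with
    | zero => exact ⟨hx, by simp [hr0]⟩
    | succ n ih =>
      obtain ⟨hV, hb⟩ := ih
      obtain ⟨hgS', hgle'⟩ := hg (r n) hV
      refine ⟨?_, ?_⟩
      · rw [hrsucc]; exact V.sub_mem hV (hSV hgS')
      · rw [hrsucc]
        calc ‖r n - g (r n)‖ ≤ θ * ‖r n‖ := hgle'
          _ ≤ θ * (θ ^ n * ‖x‖) := mul_le_mul_of_nonneg_left hb hθ0
          _ = θ ^ (n + 1) * ‖x‖ := by ring
  have hmem : ∀ n, x - r n ∈ S := by
    intro n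
    induction n with
    | zero => simp [hr0]
    | succ n ih =>
      have heq : x - r (n + 1) = (x - r n) + g (r n) := by rw [hrsucc]; abel
      rw [heq]
      exact S.add_mem ih (hg (r n) (key n).1).1
  have hnorm0 : Tendsto (fun n => ‖r n‖) atTop (nhds 0) := by
    have h1 : Tendsto (fun n => θ ^ n * ‖x‖) atTop (nhds 0) := by
      have := (tendsto_pow_atTop_nhds_zero_of_lt_one hθ0 hθ).mul_const ‖x‖
      simpa using this
    exact squeeze_zero (fun n => norm_nonneg _) (fun n => (key n).2) h1
  have hr_to_0 : Tendsto r atTop (nhds 0) := by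
    rwa [tendsto_zero_iff_norm_tendsto_zero]
  have hlim : Tendsto (fun n => x - r n) atTop (nhds x) := by
    have := tendsto_const_nhds (x := x) (f := atTop (α := ℕ)) |>.sub hr_to_0
    simpa using this
  exact hS.mem_of_tendsto hlim (Eventually.of_forall hmem)

/-- Basic facts about `projNorm`. -/
lemma projNorm_facts (E F : Submodule ℝ X) (h : IsCompl E F) {M : ℝ}
    (hbound : ∀ x : X, ‖(E.linearProjOfIsCompl F h x : X)‖ ≤ M * ‖x‖) (hbot : E ≠ ⊥) :
    1 ≤ BY.projNorm E F h ∧ BY.projNorm E F h ≤ M ∧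
      ∀ x : X, ‖(E.linearProjOfIsCompl F h x : X)‖ ≤ BY.projNorm E F h * ‖x‖ := by
  set f : X → ℝ := fun x => ‖(E.linearProjOfIsCompl F h x : X)‖ with hf
  obtain ⟨e, heE, he0⟩ := Submodule.exists_mem_ne_zero_of_ne_bot hbot
  set u : X := ‖e‖⁻¹ • e with hu
  have hue : u ∈ E := E.smul_mem _ heE
  have hunorm : ‖u‖ = 1 := by
    rw [hu, norm_smul, norm_inv, norm_norm]
    exact inv_mul_cancel₀ (norm_ne_zero_iff.mpr he0)
  have hfu : f u = 1 := by
    have hproj : (E.linearProjOfIsCompl F h) u = ⟨u, hue⟩ :=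
      Submodule.linearProjOfIsCompl_apply_left h ⟨u, hue⟩
    show ‖((E.linearProjOfIsCompl F h) u : X)‖ = 1
    rw [hproj]
    exact hunorm
  have hM1 : 1 ≤ M := by
    have h2 : f u ≤ M * ‖u‖ := hbound u
    rw [hfu, hunorm, mul_one] at h2
    exact h2
  have hM0 : 0 ≤ M := le_trans zero_le_one hM1
  have hbdd : BddAbove (f '' Metric.closedBall 0 1) := by
    refine ⟨M, ?_⟩
    rintro y ⟨z, hz, rfl⟩
    rw [mem_closedBall_zero_iff] at hz
    calc f z ≤ M * ‖z‖ := hbound z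
      _ ≤ M * 1 := mul_le_mul_of_nonneg_left hz hM0
      _ = M := mul_one M
  have hmemu : u ∈ Metric.closedBall (0 : X) 1 := by
    rw [mem_closedBall_zero_iff, hunorm]
  have h1le : 1 ≤ BY.projNorm E F h := by
    have := le_csSup hbdd ⟨u, hmemu, hfu⟩
    exact this
  refine ⟨h1le, ?_, ?_⟩
  · refine csSup_le ⟨f 0, ⟨0, by simp, rfl⟩⟩ ?_
    rintro y ⟨z, hz, rfl⟩
    rw [mem_closedBall_zero_iff] at hz
    calc f z ≤ M * ‖z‖ := hbound z
      _ ≤ M * 1 := mul_le_mul_of_nonneg_left hz hM0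
      _ = M := mul_one M
  · intro x
    by_cases hx : x = 0
    · rw [hx]
      simp
    · set w : X := ‖x‖⁻¹ • x with hw
      have hwb : w ∈ Metric.closedBall (0 : X) 1 := by
        rw [mem_closedBall_zero_iff, hw, norm_smul, norm_inv, norm_norm]
        rw [inv_mul_cancel₀ (norm_ne_zero_iff.mpr hx)]
      have hfw : f w ≤ BY.projNorm E F h := le_csSup hbdd ⟨w, hwb, rfl⟩
      have hxw : x = ‖x‖ • w := by
        rw [hw, smul_smul, mul_inv_cancel₀ (norm_ne_zero_iff.mpr hx), one_smul]
      have hfx : f x = ‖x‖ * f w := by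
        conv_lhs => rw [hxw]
        show ‖((E.linearProjOfIsCompl F h) (‖x‖ • w) : X)‖ = ‖x‖ * f w
        rw [_root_.map_smul, Submodule.coe_smul, norm_smul, norm_norm]
      rw [show ‖((E.linearProjOfIsCompl F h) x : X)‖ = f x from rfl, hfx]
      calc ‖x‖ * f w ≤ ‖x‖ * BY.projNorm E F h :=
            mul_le_mul_of_nonneg_left hfw (norm_nonneg x)
        _ = BY.projNorm E F h * ‖x‖ := mul_comm _ _

end Aux


/-- Lemma A.1 of the paper. Let `B = E ⊕ F` be a splitting into closed
subspaces, and `E'` a closed subspace with `d_H(E, E') < |π_{E⊕F}|⁻¹` (so that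
`B = E' ⊕ F`). Then (i) `|π_{E'⊕F}| ≤ |π_{E⊕F}| / (1 - |π_{E⊕F}| d_H(E, E'))` and
(ii) `|π_{F⊕E'}|_E| ≤ 2 |π_{E'⊕F}| d_H(E, E')`. -/
theorem statement12 {B : Type*} [NormedAddCommGroup B] [NormedSpace ℝ B] [CompleteSpace B]
    (E F E' : Submodule ℝ B)
    (hEc : IsClosed (E : Set B)) (hFc : IsClosed (F : Set B)) (hE'c : IsClosed (E' : Set B))
    (hEbot : E ≠ ⊥) (hE'bot : E' ≠ ⊥)
    (h : IsCompl E F)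
    (hd : BY.dH E E' < (BY.projNorm E F h)⁻¹) :
    ∃ h' : IsCompl E' F,
      BY.projNorm E' F h' ≤
        BY.projNorm E F h / (1 - BY.projNorm E F h * BY.dH E E') ∧
      BY.projNormOn F E' h'.symm {v : B | v ∈ E ∧ ‖v‖ ≤ 1} ≤
        2 * BY.projNorm E' F h' * BY.dH E E' := by
  classical
  set πL := E.linearProjOfClosedCompl F h hEc hFc with hπL
  have hboundE : ∀ x : B, ‖(E.linearProjOfIsCompl F h x : B)‖ ≤ ‖πL‖ * ‖x‖ := by
    intro x
    exact πL.le_opNorm x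
  obtain ⟨hp1, -, hple⟩ := projNorm_facts E F h hboundE hEbot
  set p := BY.projNorm E F h with hp
  have hp0 : 0 < p := lt_of_lt_of_le one_pos hp1
  set d := BY.dH E E' with hdd
  have hd_eq : d = Metric.hausdorffDist (BY.subSphere E) (BY.subSphere E') := rfl
  have hd0 : 0 ≤ d := by rw [hd_eq]; exact Metric.hausdorffDist_nonneg
  have hpd : p * d < 1 := by
    have := mul_lt_mul_of_pos_left hd hp0
    rwa [mul_inv_cancel₀ (ne_of_gt hp0)] at this
  set c := 1 - p * d with hc
  have hc0 : 0 < c := by rw [hc]; linarith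
  have hpd0 : 0 ≤ p * d := mul_nonneg hp0.le hd0
  -- unit spheres are nonempty and bounded
  have sphere_ne : ∀ W : Submodule ℝ B, W ≠ ⊥ → (BY.subSphere W).Nonempty := by
    intro W hW
    obtain ⟨w, hwW, hw0⟩ := Submodule.exists_mem_ne_zero_of_ne_bot hW
    refine ⟨‖w‖⁻¹ • w, W.smul_mem _ hwW, ?_⟩
    rw [norm_smul, norm_inv, norm_norm, inv_mul_cancel₀ (norm_ne_zero_iff.mpr hw0)]
  have sE := sphere_ne E hEbot
  have sE' := sphere_ne E' hE'bot
  have hsbdd : ∀ W : Submodule ℝ B, Bornology.IsBounded (BY.subSphere W) := by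
    intro W
    refine (Metric.isBounded_closedBall (x := (0 : B)) (r := 1)).subset ?_
    rintro v ⟨-, hv⟩
    rw [mem_closedBall_zero_iff, hv]
  have hfin : EMetric.hausdorffEdist (BY.subSphere E) (BY.subSphere E') ≠ ⊤ :=
    Metric.hausdorffEdist_ne_top_of_nonempty_of_bounded sE sE' (hsbdd E) (hsbdd E')
  -- approximation lemmas
  have happroxE' : ∀ x ∈ BY.subSphere E', ∀ ε > (0 : ℝ),
      ∃ u ∈ BY.subSphere E, ‖x - u‖ < d + ε := by
    intro x hx ε hε
    have h1 := Metric.infDist_le_hausdorffDist_of_mem hx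
      (by rw [Metric.hausdorffEDist_comm]; exact hfin)
    rw [Metric.hausdorffDist_comm, ← hd_eq] at h1
    obtain ⟨u, hu, hu2⟩ := (Metric.infDist_lt_iff sE).mp (lt_of_le_of_lt h1 (show d < d + ε by linarith))
    exact ⟨u, hu, by rwa [dist_eq_norm] at hu2⟩
  have happroxE : ∀ x ∈ BY.subSphere E, ∀ ε > (0 : ℝ),
      ∃ u ∈ BY.subSphere E', ‖x - u‖ < d + ε := by
    intro x hx ε hε
    have h1 := Metric.infDist_le_hausdorffDist_of_mem hx hfin
    rw [← hd_eq] at h1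
    obtain ⟨u, hu, hu2⟩ := (Metric.infDist_lt_iff sE').mp (lt_of_le_of_lt h1 (show d < d + ε by linarith))
    exact ⟨u, hu, by rwa [dist_eq_norm] at hu2⟩
  -- projection fixes E
  have hprojE : ∀ e : B, e ∈ E → (E.linearProjOfIsCompl F h e : B) = e := by
    intro e he
    rw [show E.linearProjOfIsCompl F h e = ⟨e, he⟩ from
      Submodule.linearProjOfIsCompl_apply_left h ⟨e, he⟩]
  -- the key lower bound on E'
  have hlow : ∀ x ∈ E', c * ‖x‖ ≤ ‖(E.linearProjOfIsCompl F h x : B)‖ := by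
    intro x hx
    by_cases hx0 : x = 0
    · simp [hx0]
    · set u' : B := ‖x‖⁻¹ • x with hu'
      have hxn : ‖x‖ ≠ 0 := norm_ne_zero_iff.mpr hx0
      have hu'mem : u' ∈ BY.subSphere E' :=
        ⟨E'.smul_mem _ hx, by
          rw [hu', norm_smul, norm_inv, norm_norm, inv_mul_cancel₀ hxn]⟩
      have hkey : c ≤ ‖(E.linearProjOfIsCompl F h u' : B)‖ := by
        refine le_of_forall_pos_le_add ?_
        intro ε hε
        obtain ⟨u, ⟨huE, hun⟩, hdist⟩ := happroxE' u' hu'mem (ε / p) (by positivity)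
        have hπu : (E.linearProjOfIsCompl F h u : B) = u := hprojE u huE
        have hdiff : ‖(E.linearProjOfIsCompl F h u' : B) - u‖ ≤ p * (d + ε / p) := by
          have heq : (E.linearProjOfIsCompl F h (u' - u) : B) =
              (E.linearProjOfIsCompl F h u' : B) - u := by
            rw [map_sub, Submodule.coe_sub, hπu]
          calc ‖(E.linearProjOfIsCompl F h u' : B) - u‖
              = ‖(E.linearProjOfIsCompl F h (u' - u) : B)‖ := by rw [heq]
            _ ≤ p * ‖u' - u‖ := hple _
            _ ≤ p * (d + ε / p) := mul_le_mul_of_nonneg_left hdist.le hp0.le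
        have hpe : p * (d + ε / p) = p * d + ε := by field_simp
        have htri : ‖u‖ - ‖(E.linearProjOfIsCompl F h u' : B)‖ ≤
            ‖u - (E.linearProjOfIsCompl F h u' : B)‖ := norm_sub_norm_le _ _
        rw [norm_sub_rev] at htri
        rw [hun] at htri
        rw [hc]
        rw [hpe] at hdiff
        linarith
      have hxval : (E.linearProjOfIsCompl F h x : B) = ‖x‖ • (E.linearProjOfIsCompl F h u' : B) := by
        have : x = ‖x‖ • u' := by
          rw [hu', smul_smul, mul_inv_cancel₀ hxn, one_smul]
        conv_lhs => rw [this]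
        rw [_root_.map_smul, Submodule.coe_smul]
      rw [hxval, norm_smul, norm_norm, mul_comm c ‖x‖]
      exact mul_le_mul_of_nonneg_left hkey (norm_nonneg x)
  -- the image of E' under the projection
  set Slm : B →ₗ[ℝ] B := E.subtype ∘ₗ E.linearProjOfIsCompl F h with hSlm
  have hSlmapp : ∀ x : B, Slm x = (E.linearProjOfIsCompl F h x : B) := fun _ => rfl
  set S : Submodule ℝ B := E'.map Slm with hS
  have hSE : S ≤ E := by
    intro y hy
    obtain ⟨x, hx, rfl⟩ := Submodule.mem_map.mp hy
    exact Submodule.coe_mem _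
  have hScl : IsClosed (S : Set B) := by
    refine IsSeqClosed.isClosed ?_
    intro u y hu hy
    choose v hvE' hveq using fun n => Submodule.mem_map.mp (hu n)
    have hcau : CauchySeq v := by
      rw [Metric.cauchySeq_iff]
      intro ε hε
      obtain ⟨N, hN⟩ := Metric.cauchySeq_iff.mp hy.cauchySeq (c * ε) (by positivity)
      refine ⟨N, fun m hm n hn => ?_⟩
      have h1 := hlow (v m - v n) (E'.sub_mem (hvE' m) (hvE' n))
      have h2 : (E.linearProjOfIsCompl F h (v m - v n) : B) = u m - u n := by
        rw [map_sub, Submodule.coe_sub, ← hSlmapp, ← hSlmapp, hveq m, hveq n]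
      rw [h2] at h1
      have h3 : ‖u m - u n‖ < c * ε := by
        rw [← dist_eq_norm]; exact hN m hm n hn
      rw [dist_eq_norm]
      exact (mul_lt_mul_iff_right₀ hc0).mp (lt_of_le_of_lt h1 h3)
    obtain ⟨z, hz⟩ := cauchySeq_tendsto_of_complete hcau
    have hzE' : z ∈ E' := hE'c.mem_of_tendsto hz (Filter.Eventually.of_forall hvE')
    have hcont : Continuous fun x : B => (E.linearProjOfIsCompl F h x : B) := by
      have h1 : Continuous fun x : B => ((πL x : E) : B) :=
        continuous_subtype_val.comp πL.continuous
      have h2 : (fun x : B => ((πL x : E) : B)) =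
          fun x : B => (E.linearProjOfIsCompl F h x : B) := by
        funext x
        rw [hπL, Submodule.coe_continuous_linearProjOfClosedCompl']; rfl
      rwa [h2] at h1
    have hlim2 : Filter.Tendsto u Filter.atTop (nhds ((E.linearProjOfIsCompl F h z : B))) := by
      refine Filter.Tendsto.congr (fun n => ?_) ((hcont.tendsto z).comp hz)
      show (E.linearProjOfIsCompl F h (v n) : B) = u n
      rw [← hSlmapp, hveq n]
    rw [tendsto_nhds_unique hy hlim2]
    exact Submodule.mem_map.mpr ⟨z, hzE', rfl⟩
  -- density
  set θ : ℝ := (1 + p * d) / 2 with hθ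
  have hθ0 : 0 ≤ θ := by rw [hθ]; linarith
  have hθ1 : θ < 1 := by rw [hθ]; linarith
  have hES : E ≤ S := by
    refine ratio_dense S E hScl hSE hθ0 hθ1 ?_
    intro e he
    by_cases he0 : e = 0
    · exact ⟨0, S.zero_mem, by simp [he0]⟩
    · have hen : ‖e‖ ≠ 0 := norm_ne_zero_iff.mpr he0
      have hεp : (0 : ℝ) < (1 - p * d) / (2 * p) := div_pos (by linarith) (by positivity)
      set w : B := ‖e‖⁻¹ • e with hw
      have hwmem : w ∈ BY.subSphere E :=
        ⟨E.smul_mem _ he, by rw [hw, norm_smul, norm_inv, norm_norm, inv_mul_cancel₀ hen]⟩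
      obtain ⟨u', hu', hdist⟩ := happroxE w hwmem _ hεp
      refine ⟨Slm (‖e‖ • u'), Submodule.mem_map.mpr ⟨‖e‖ • u', E'.smul_mem _ hu'.1, rfl⟩, ?_⟩
      have hkey : e - Slm (‖e‖ • u') = (E.linearProjOfIsCompl F h (e - ‖e‖ • u') : B) := by
        rw [map_sub, Submodule.coe_sub, hprojE e he, hSlmapp]
      have hsm : e - ‖e‖ • u' = ‖e‖ • (w - u') := by
        rw [smul_sub, hw, smul_smul, mul_inv_cancel₀ hen, one_smul]
      calc ‖e - Slm (‖e‖ • u')‖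
          = ‖(E.linearProjOfIsCompl F h (e - ‖e‖ • u') : B)‖ := by rw [hkey]
        _ ≤ p * ‖e - ‖e‖ • u'‖ := hple _
        _ = p * (‖e‖ * ‖w - u'‖) := by rw [hsm, norm_smul, norm_norm]
        _ ≤ p * (‖e‖ * (d + (1 - p * d) / (2 * p))) := by
            refine mul_le_mul_of_nonneg_left ?_ hp0.le
            exact mul_le_mul_of_nonneg_left hdist.le (norm_nonneg e)
        _ = θ * ‖e‖ := by rw [hθ]; field_simp; ring
  -- E' and F are complementary
  have hdis : Disjoint E' F := by
    rw [Submodule.disjoint_def]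
    intro x hxE' hxF
    have h1 := hlow x hxE'
    have h2 : E.linearProjOfIsCompl F h x = 0 :=
      Submodule.projectionOnto_apply_of_mem_right h hxF
    rw [h2] at h1
    simp only [Submodule.coe_zero, norm_zero] at h1
    have h1' : c * ‖x‖ ≤ c * 0 := by rwa [mul_zero]
    have hx0 : ‖x‖ ≤ 0 := le_of_mul_le_mul_left h1' hc0
    exact norm_le_zero_iff.mp hx0
  have hcod : Codisjoint E' F := by
    rw [codisjoint_iff, eq_top_iff]
    intro x _
    have hpx : (E.linearProjOfIsCompl F h x : B) ∈ S := hES (Submodule.coe_mem _)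
    obtain ⟨e', he', heq⟩ := Submodule.mem_map.mp hpx
    have hxf : x - e' ∈ F := by
      refine (Submodule.linearProjOfIsCompl_apply_eq_zero_iff h).mp ?_
      rw [map_sub]
      have heq2 : E.projectionOnto F h e' = E.projectionOnto F h x :=
        Subtype.coe_injective ((hSlmapp e').symm.trans heq)
      rw [heq2, sub_self]
    exact Submodule.mem_sup.mpr ⟨e', he', x - e', hxf, by abel⟩
  have h' : IsCompl E' F := ⟨hdis, hcod⟩
  -- bound on the projection onto E' along F
  have hprojeq : ∀ x : B,
      (E.linearProjOfIsCompl F h ((E'.linearProjOfIsCompl F h' x : B)) : B) =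
        (E.linearProjOfIsCompl F h x : B) := by
    intro x
    have hsum : (E'.linearProjOfIsCompl F h' x : B) + (F.linearProjOfIsCompl E' h'.symm x : B) = x :=
      Submodule.projection_add_projection_eq_self h' x
    have h0 : E.linearProjOfIsCompl F h ((F.linearProjOfIsCompl E' h'.symm x : B)) = 0 :=
      Submodule.projectionOnto_apply_of_mem_right h (Submodule.coe_mem _)
    have : E.linearProjOfIsCompl F h ((E'.linearProjOfIsCompl F h' x : B)) =
        E.linearProjOfIsCompl F h x := by
      conv_rhs => rw [← hsum]
      rw [map_add, h0, add_zero]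
    rw [this]
  have hbound' : ∀ x : B, ‖(E'.linearProjOfIsCompl F h' x : B)‖ ≤ p / c * ‖x‖ := by
    intro x
    have h1 := hlow ((E'.linearProjOfIsCompl F h' x : B)) (Submodule.coe_mem _)
    rw [hprojeq x] at h1
    have h2 := hple x
    rw [div_mul_eq_mul_div, le_div_iff₀ hc0, mul_comm]
    exact le_trans h1 h2
  obtain ⟨hp'1, hp'leM, hp'le⟩ := projNorm_facts E' F h' hbound' hE'bot
  refine ⟨h', hp'leM, ?_⟩
  -- part (ii)
  set p' := BY.projNorm E' F h' with hp'
  have hp'0 : 0 < p' := lt_of_lt_of_le one_pos hp'1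
  show sSup ((fun x => ‖(F.linearProjOfIsCompl E' h'.symm x : B)‖) ''
      {v : B | v ∈ E ∧ ‖v‖ ≤ 1}) ≤ 2 * p' * d
  refine csSup_le ⟨_, ⟨0, ⟨E.zero_mem, by simp⟩, rfl⟩⟩ ?_
  rintro y ⟨v, ⟨hvE, hv1⟩, rfl⟩
  by_cases hv0 : v = 0
  · simp only [hv0, map_zero, Submodule.coe_zero, norm_zero]
    positivity
  · have hvn : ‖v‖ ≠ 0 := norm_ne_zero_iff.mpr hv0
    refine le_of_forall_pos_le_add ?_
    intro ε hε
    have hε' : (0 : ℝ) < ε / (2 * p') := by positivity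
    set w : B := ‖v‖⁻¹ • v with hw
    have hwmem : w ∈ BY.subSphere E :=
      ⟨E.smul_mem _ hvE, by rw [hw, norm_smul, norm_inv, norm_norm, inv_mul_cancel₀ hvn]⟩
    obtain ⟨u', hu', hdist⟩ := happroxE w hwmem _ hε'
    have hzero : F.linearProjOfIsCompl E' h'.symm (‖v‖ • u') = 0 :=
      Submodule.projectionOnto_apply_of_mem_right h'.symm (E'.smul_mem _ hu'.1)
    have hstep : (F.linearProjOfIsCompl E' h'.symm v : B) =
        (F.linearProjOfIsCompl E' h'.symm (v - ‖v‖ • u') : B) := by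
      rw [map_sub, hzero, sub_zero]
    set z : B := v - ‖v‖ • u' with hz
    have hzn : ‖z‖ ≤ d + ε / (2 * p') := by
      have hsm : z = ‖v‖ • (w - u') := by
        rw [hz, smul_sub, hw, smul_smul, mul_inv_cancel₀ hvn, one_smul]
      rw [hsm, norm_smul, norm_norm]
      calc ‖v‖ * ‖w - u'‖ ≤ 1 * ‖w - u'‖ :=
            mul_le_mul_of_nonneg_right hv1 (norm_nonneg _)
        _ = ‖w - u'‖ := one_mul _
        _ ≤ d + ε / (2 * p') := hdist.le
    have hdecomp : (F.linearProjOfIsCompl E' h'.symm z : B) =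
        z - (E'.linearProjOfIsCompl F h' z : B) := by
      have hsum := Submodule.projection_add_projection_eq_self h' z
      rw [eq_sub_iff_add_eq, add_comm]
      exact hsum
    calc ‖(F.linearProjOfIsCompl E' h'.symm v : B)‖
        = ‖(F.linearProjOfIsCompl E' h'.symm z : B)‖ := by rw [hstep]
      _ ≤ ‖z‖ + ‖(E'.linearProjOfIsCompl F h' z : B)‖ := by
          rw [hdecomp]; exact norm_sub_le _ _
      _ ≤ ‖z‖ + p' * ‖z‖ := by linarith [hp'le z]
      _ = (1 + p') * ‖z‖ := by ring
      _ ≤ 2 * p' * ‖z‖ :=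
          mul_le_mul_of_nonneg_right (by linarith) (norm_nonneg z)
      _ ≤ 2 * p' * (d + ε / (2 * p')) := by
          exact mul_le_mul_of_nonneg_left hzn (by positivity)
      _ = 2 * p' * d + ε := by
          have h2p : (2 : ℝ) * p' ≠ 0 := ne_of_gt (by positivity)
          field_simp
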